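/- arXiv:2108.05237 — 3 statements merged into one kernel-verified Lean document; each statement's English description precedes it below -/
import Mathlib

section
/- For two linear subspaces A and B of V with A ⊥ B, the variation function of the direct sum equals the sum of the variation functions: 𝔎_{A ⊕ B} = 𝔎_A + 𝔎_B pointwise. -/
open scoped Pointwise RealInnerProductSpace

lemma coord_sq_le {N : ℕ} (v : EuclideanSpace ℝ (Fin N)) (i : Fin N) :
    (v i)^2 ≤ ‖v‖^2 := by
  rw [EuclideanSpace.norm_eq, Real.sq_sqrt (by positivity)]
  calc (v i)^2 ≤ ∑ j, ‖v j‖^2 := by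
        refine Finset.single_le_sum (f := fun j => ‖v j‖^2) (fun j _ => by positivity)
          (Finset.mem_univ i) |>.trans_eq' ?_
        rw [Real.norm_eq_abs, sq_abs]
    _ = _ := rfl


/-- The variation function of a set `A ⊆ ℝ^N`:
`𝔎_A(i) = sup_{a ∈ A \ {0}} a_i² / ‖a‖²`. -/
noncomputable def varFun {N : ℕ} (A : Set (EuclideanSpace ℝ (Fin N))) (i : Fin N) : ℝ :=
  ⨆ a : {a : EuclideanSpace ℝ (Fin N) // a ∈ A ∧ a ≠ 0}, (a.1 i) ^ 2 / ‖a.1‖ ^ 2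

lemma varFun_bdd {N : ℕ} (S : Set (EuclideanSpace ℝ (Fin N))) (i : Fin N) :
    BddAbove (Set.range fun a : {a : EuclideanSpace ℝ (Fin N) // a ∈ S ∧ a ≠ 0} =>
      (a.1 i) ^ 2 / ‖a.1‖ ^ 2) := by
  refine ⟨1, ?_⟩
  rintro x ⟨a, rfl⟩
  have h0 : (0:ℝ) < ‖a.1‖ := norm_pos_iff.mpr a.2.2
  rw [div_le_one (by positivity)]
  exact coord_sq_le _ _

lemma varFun_nonneg {N : ℕ} (S : Set (EuclideanSpace ℝ (Fin N))) (i : Fin N) :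
    0 ≤ varFun S i :=
  Real.iSup_nonneg fun a => by positivity

lemma term_le_varFun {N : ℕ} {S : Set (EuclideanSpace ℝ (Fin N))} (i : Fin N)
    {a : EuclideanSpace ℝ (Fin N)} (ha : a ∈ S) (ha0 : a ≠ 0) :
    (a i)^2 / ‖a‖^2 ≤ varFun S i :=
  le_ciSup (varFun_bdd S i) ⟨a, ha, ha0⟩

lemma sq_le_varFun_mul {N : ℕ} {S : Set (EuclideanSpace ℝ (Fin N))} (i : Fin N)
    {a : EuclideanSpace ℝ (Fin N)} (ha : a ∈ S) :
    (a i)^2 ≤ varFun S i * ‖a‖^2 := by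
  by_cases h : a = 0
  · simp [h]
  · have h0 : (0:ℝ) < ‖a‖^2 := by
      have := norm_pos_iff.mpr h; positivity
    exact (div_le_iff₀ h0).mp (term_le_varFun i ha h)

lemma comb {x y P Q X Y : ℝ} (hP : 0 ≤ P) (hQ : 0 ≤ Q) (hX : 0 ≤ X) (hY : 0 ≤ Y)
    (hx : x^2 ≤ P*X) (hy : y^2 ≤ Q*Y) : (x+y)^2 ≤ (P+Q)*(X+Y) := by
  have h1 : (2*x*y)^2 ≤ (P*Y+Q*X)^2 := by
    nlinarith [sq_nonneg (P*Y - Q*X), mul_le_mul hx hy (sq_nonneg y) (mul_nonneg hP hX)]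
  have h2 : 0 ≤ P*Y+Q*X := by positivity
  nlinarith [h1, h2, hx, hy]

/-- For orthogonal linear subspaces `A ⊥ B`, the variation function of the direct sum
equals the sum of the variation functions: `𝔎_{A ⊕ B} = 𝔎_A + 𝔎_B` pointwise. -/
theorem varFun_directSum {N : ℕ} (A B : Submodule ℝ (EuclideanSpace ℝ (Fin N)))
    (hAB : ∀ a ∈ A, ∀ b ∈ B, ⟪a, b⟫ = 0) :
    ∀ i, varFun ((A : Set (EuclideanSpace ℝ (Fin N))) + (B : Set (EuclideanSpace ℝ (Fin N)))) i
      = varFun (A : Set (EuclideanSpace ℝ (Fin N))) i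
        + varFun (B : Set (EuclideanSpace ℝ (Fin N))) i := by
  intro i
  set SetAB := (A : Set (EuclideanSpace ℝ (Fin N))) + (B : Set (EuclideanSpace ℝ (Fin N))) with hSAB
  set KA := varFun (A : Set (EuclideanSpace ℝ (Fin N))) i with hKA
  set KB := varFun (B : Set (EuclideanSpace ℝ (Fin N))) i with hKB
  set S := varFun SetAB i with hS
  have hmemAB : ∀ a ∈ A, ∀ b ∈ B, a + b ∈ SetAB := by
    intro a ha b hb
    exact Set.add_mem_add ha hb
  -- norm of sum
  have hnorm : ∀ a ∈ A, ∀ b ∈ B, ‖a + b‖^2 = ‖a‖^2 + ‖b‖^2 := by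
    intro a ha b hb
    rw [norm_add_sq_real, hAB a ha b hb]
    ring
  -- upper bound
  have hub : S ≤ KA + KB := by
    refine Real.iSup_le ?_ (add_nonneg (varFun_nonneg _ i) (varFun_nonneg _ i))
    rintro ⟨v, hv, hv0⟩
    obtain ⟨a, ha, b, hb, rfl⟩ := hv
    have hn : (0:ℝ) < ‖a + b‖^2 := by
      have := norm_pos_iff.mpr hv0; positivity
    show ((a+b) i)^2 / ‖a+b‖^2 ≤ KA + KB
    rw [div_le_iff₀ hn, hnorm a ha b hb]
    have hvi : (a + b) i = a i + b i := rfl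
    rw [hvi]
    exact comb (varFun_nonneg _ i) (varFun_nonneg _ i) (by positivity) (by positivity)
      (sq_le_varFun_mul i ha) (sq_le_varFun_mul i hb)
  -- S nonneg
  have hSnn : 0 ≤ S := varFun_nonneg _ i
  -- core lower bound for pairs of nonzero elements
  have hcore : ∀ a ∈ A, a ≠ 0 → ∀ b ∈ B, b ≠ 0 →
      (a i)^2/‖a‖^2 + (b i)^2/‖b‖^2 ≤ S := by
    intro a ha ha0 b hb hb0
    have hna : (0:ℝ) < ‖a‖^2 := by have := norm_pos_iff.mpr ha0; positivity
    have hnb : (0:ℝ) < ‖b‖^2 := by have := norm_pos_iff.mpr hb0; positivity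
    by_cases hz : a i = 0 ∧ b i = 0
    · rw [hz.1, hz.2]; simpa using hSnn
    · set T := (a i)^2/‖a‖^2 + (b i)^2/‖b‖^2 with hT
      have hTpos : 0 < T := by
        rcases not_and_or.mp hz with h | h
        · have : 0 < (a i)^2 := by positivity
          have : 0 < (a i)^2/‖a‖^2 := by positivity
          have h2 : 0 ≤ (b i)^2/‖b‖^2 := by positivity
          rw [hT]; linarith
        · have : 0 < (b i)^2 := by positivity
          have : 0 < (b i)^2/‖b‖^2 := by positivity
          have h2 : 0 ≤ (a i)^2/‖a‖^2 := by positivity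
          rw [hT]; linarith
      set v := (a i / ‖a‖^2) • a + (b i / ‖b‖^2) • b with hv
      have hvmem : v ∈ SetAB :=
        hmemAB _ (A.smul_mem _ ha) _ (B.smul_mem _ hb)
      have hvi : v i = T := by
        show (a i / ‖a‖^2) * a i + (b i / ‖b‖^2) * b i = T
        rw [hT]; ring
      have hv2 : ‖v‖^2 = T := by
        rw [hv, norm_add_sq_real, real_inner_smul_left, real_inner_smul_right,
          hAB a ha b hb, norm_smul, norm_smul, mul_pow, mul_pow,
          Real.norm_eq_abs, Real.norm_eq_abs, sq_abs, sq_abs, hT]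
        field_simp
        ring
      have hv0 : v ≠ 0 := by
        intro h
        rw [h] at hv2
        simp at hv2
        exact absurd hv2.symm hTpos.ne'
      have := term_le_varFun i hvmem hv0
      rwa [hvi, hv2, sq, mul_div_assoc, div_self (ne_of_gt hTpos), mul_one] at this
  -- lower bound
  have hlb : KA + KB ≤ S := by
    by_cases hA : Nonempty {a : EuclideanSpace ℝ (Fin N) // a ∈ (A : Set _) ∧ a ≠ 0}
    · by_cases hB : Nonempty {b : EuclideanSpace ℝ (Fin N) // b ∈ (B : Set _) ∧ b ≠ 0}
      · have : KA ≤ S - KB := by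
          refine ciSup_le fun a => ?_
          rw [le_sub_iff_add_le, add_comm, ← le_sub_iff_add_le]
          refine ciSup_le fun b => ?_
          rw [le_sub_iff_add_le, add_comm]
          exact hcore a.1 a.2.1 a.2.2 b.1 b.2.1 b.2.2
        linarith
      · have hBe : IsEmpty {b : EuclideanSpace ℝ (Fin N) // b ∈ (B : Set _) ∧ b ≠ 0} :=
          not_nonempty_iff.mp hB
        have hKB0 : KB = 0 := Real.iSup_of_isEmpty _
        rw [hKB0, add_zero]
        refine ciSup_le fun a => ?_
        have hmem : a.1 ∈ SetAB := by
          have := hmemAB a.1 a.2.1 0 B.zero_mem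
          simpa using this
        exact term_le_varFun i hmem a.2.2
    · have hAe : IsEmpty {a : EuclideanSpace ℝ (Fin N) // a ∈ (A : Set _) ∧ a ≠ 0} :=
        not_nonempty_iff.mp hA
      have hKA0 : KA = 0 := Real.iSup_of_isEmpty _
      rw [hKA0, zero_add]
      refine Real.iSup_le (fun b => ?_) hSnn
      have hmem : b.1 ∈ SetAB := by
        have := hmemAB 0 A.zero_mem b.1 b.2.1
        simpa using this
      exact term_le_varFun i hmem b.2.2
  linarith
end

section
/- If M ⊆ V is a symmetric and conic set (λM ⊆ M for λ > 0 and −M = M) and v ∈ V, then the variation function of {v} − M equals the variation function of span{v} + cl(M): 𝔎_{{v}−M} = 𝔎_{⟨v⟩ + cl(M)}. -/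
open scoped Pointwise

/-- If `M` is conic and symmetric, then for any `v`:
`𝔎_{{v} − M} = 𝔎_{⟨v⟩ + cl(M)}`. -/
theorem varFun_singleton_sub_conic {N : ℕ} (M : Set (EuclideanSpace ℝ (Fin N)))
    (v : EuclideanSpace ℝ (Fin N))
    (hconic : ∀ (l : ℝ), 0 < l → ∀ m ∈ M, l • m ∈ M)
    (hsymm : -M = M) :
    varFun (({v} : Set (EuclideanSpace ℝ (Fin N))) - M)
      = varFun ((Submodule.span ℝ {v} : Set (EuclideanSpace ℝ (Fin N))) + closure M) := by
  have hsymm' : ∀ x : EuclideanSpace ℝ (Fin N), x ∈ M → -x ∈ M := by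
    intro x hx
    rw [← hsymm]
    exact Set.neg_mem_neg.mpr hx
  have hM' : ∀ (t : ℝ), t ≠ 0 → ∀ m ∈ M, t • m ∈ M := by
    intro t ht m hm
    rcases lt_or_gt_of_ne ht with h | h
    · have : (-t) • m ∈ M := hconic (-t) (by linarith) m hm
      have := hsymm' _ this
      simpa using this
    · exact hconic t h m hm
  have hclM : ∀ (t : ℝ), t ≠ 0 → ∀ c ∈ closure M, t • c ∈ closure M := by
    intro t ht c hc
    exact map_mem_closure (continuous_const_smul t) hc (fun m hm => hM' t ht m hm)
  funext i
  set g : EuclideanSpace ℝ (Fin N) → ℝ := fun a => a i ^ 2 / ‖a‖ ^ 2 with hgdef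
  have hg0 : ∀ a, 0 ≤ g a := fun a => div_nonneg (sq_nonneg _) (sq_nonneg _)
  have hgkey : ∀ a : EuclideanSpace ℝ (Fin N), a i ^ 2 ≤ ‖a‖ ^ 2 := by
    intro a
    have h1 : ‖a‖ ^ 2 = ∑ j, ‖a j‖ ^ 2 := by
      rw [EuclideanSpace.norm_eq]
      exact Real.sq_sqrt (Finset.sum_nonneg fun j _ => sq_nonneg _)
    rw [h1]
    have h2 : ‖a i‖ ^ 2 ≤ ∑ j, ‖a j‖ ^ 2 :=
      Finset.single_le_sum (f := fun j => ‖a j‖ ^ 2) (fun j _ => sq_nonneg _) (Finset.mem_univ i)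
    simpa [Real.norm_eq_abs, sq_abs] using h2
  have hg1 : ∀ a, g a ≤ 1 := by
    intro a
    rcases eq_or_ne (‖a‖) 0 with h | h
    · simp [hgdef, h]
    · rw [hgdef]
      rw [div_le_one (by positivity)]
      exact hgkey a
  have hgsmul : ∀ (t : ℝ), t ≠ 0 → ∀ a, g (t • a) = g a := by
    intro t ht a
    simp only [hgdef, PiLp.smul_apply, smul_eq_mul, norm_smul, mul_pow,
      Real.norm_eq_abs, sq_abs]
    exact mul_div_mul_left _ _ (pow_ne_zero 2 ht)
  have hgneg : ∀ a, g (-a) = g a := by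
    intro a
    have := hgsmul (-1) (by norm_num) a
    simpa using this
  have hgcont : ∀ a : EuclideanSpace ℝ (Fin N), a ≠ 0 → ContinuousAt g a := by
    intro a ha
    have hna : ‖a‖ ^ 2 ≠ 0 := by
      have : ‖a‖ ≠ 0 := norm_ne_zero_iff.mpr ha
      positivity
    apply ContinuousAt.div
    · exact ((PiLp.continuous_apply 2 (fun _ : Fin N => ℝ) i).pow 2).continuousAt
    · exact ((continuous_norm).pow 2).continuousAt
    · exact hna
  set A : Set (EuclideanSpace ℝ (Fin N)) := ({v} : Set (EuclideanSpace ℝ (Fin N))) - M with hA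
  set B : Set (EuclideanSpace ℝ (Fin N)) :=
    (Submodule.span ℝ {v} : Set (EuclideanSpace ℝ (Fin N))) + closure M with hB
  have hbddA : BddAbove (Set.range fun a : {a : EuclideanSpace ℝ (Fin N) // a ∈ A ∧ a ≠ 0} =>
      g a.1) := by
    refine ⟨1, ?_⟩
    rintro y ⟨a, rfl⟩
    exact hg1 _
  have hbddB : BddAbove (Set.range fun a : {a : EuclideanSpace ℝ (Fin N) // a ∈ B ∧ a ≠ 0} =>
      g a.1) := by
    refine ⟨1, ?_⟩
    rintro y ⟨a, rfl⟩
    exact hg1 _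
  show (⨆ a : {a : EuclideanSpace ℝ (Fin N) // a ∈ A ∧ a ≠ 0}, g a.1)
      = ⨆ a : {a : EuclideanSpace ℝ (Fin N) // a ∈ B ∧ a ≠ 0}, g a.1
  set S : ℝ := ⨆ a : {a : EuclideanSpace ℝ (Fin N) // a ∈ A ∧ a ≠ 0}, g a.1 with hS
  set T : ℝ := ⨆ a : {a : EuclideanSpace ℝ (Fin N) // a ∈ B ∧ a ≠ 0}, g a.1 with hT
  have hSnn : 0 ≤ S := Real.iSup_nonneg fun a => hg0 _
  have hTnn : 0 ≤ T := Real.iSup_nonneg fun a => hg0 _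
  -- membership helper
  have hmemS : ∀ x, x ∈ A → x ≠ 0 → g x ≤ S := by
    intro x hx hx0
    exact le_ciSup hbddA ⟨x, hx, hx0⟩
  have hmemT : ∀ x, x ∈ B → x ≠ 0 → g x ≤ T := by
    intro x hx hx0
    exact le_ciSup hbddB ⟨x, hx, hx0⟩
  -- Lemma B : for c in closure M with v - c ≠ 0, g (v - c) ≤ S
  have lemB : ∀ c ∈ closure M, v - c ≠ 0 → g (v - c) ≤ S := by
    intro c hc hne
    have hnb : (nhdsWithin c M).NeBot := mem_closure_iff_nhdsWithin_neBot.mp hc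
    have hcont : ContinuousAt (fun x => g (v - x)) c :=
      (hgcont _ hne).comp ((continuous_const.sub continuous_id).continuousAt)
    have htend : Filter.Tendsto (fun x => g (v - x)) (nhdsWithin c M) (nhds (g (v - c))) :=
      hcont.tendsto.mono_left nhdsWithin_le_nhds
    refine le_of_tendsto htend ?_
    have hev1 : ∀ᶠ x in nhdsWithin c M, v - x ≠ 0 := by
      have hc2 : ContinuousAt (fun x : EuclideanSpace ℝ (Fin N) => v - x) c :=
        (continuous_const.sub continuous_id).continuousAt
      exact (hc2.eventually_ne hne).filter_mono nhdsWithin_le_nhds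
    have hev2 : ∀ᶠ x in nhdsWithin c M, x ∈ M := eventually_mem_nhdsWithin
    filter_upwards [hev1, hev2] with x h1 h2
    exact hmemS _ (Set.sub_mem_sub rfl h2) h1
  -- Lemma C : for m in M nonzero, g m ≤ S
  have lemC : ∀ m ∈ M, m ≠ 0 → g m ≤ S := by
    intro m hm hm0
    have hne : (0 : ℝ) • v - m ≠ 0 := by simpa using neg_ne_zero.mpr hm0
    have hval : g ((0 : ℝ) • v - m) = g m := by
      rw [show (0 : ℝ) • v - m = -m by simp]
      exact hgneg m
    have htend0 : Filter.Tendsto (fun s : ℝ => s • v - m) (nhds 0) (nhds ((0 : ℝ) • v - m)) :=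
      (((continuous_id.smul continuous_const).sub continuous_const).continuousAt :
        ContinuousAt (fun s : ℝ => s • v - m) 0)
    have htend : Filter.Tendsto (fun s : ℝ => g (s • v - m)) (nhdsWithin 0 (Set.Ioi 0))
        (nhds (g m)) := by
      rw [← hval]
      exact ((hgcont _ hne).tendsto.comp htend0).mono_left nhdsWithin_le_nhds
    refine le_of_tendsto htend ?_
    have hev1 : ∀ᶠ s in nhdsWithin (0:ℝ) (Set.Ioi 0), s • v - m ≠ 0 := by
      have hc2 : ContinuousAt (fun s : ℝ => s • v - m) 0 :=
        ((continuous_id.smul continuous_const).sub continuous_const).continuousAt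
      exact (hc2.eventually_ne hne).filter_mono nhdsWithin_le_nhds
    have hev2 : ∀ᶠ s in nhdsWithin (0:ℝ) (Set.Ioi 0), s ∈ Set.Ioi (0:ℝ) :=
      eventually_mem_nhdsWithin
    filter_upwards [hev1, hev2] with s h1 h2
    have hs : (0:ℝ) < s := h2
    have hsne : s ≠ 0 := ne_of_gt hs
    have heq : s • v - m = s • (v - s⁻¹ • m) := by
      rw [smul_sub, smul_smul, mul_inv_cancel₀ hsne, one_smul]
    have hmem : s⁻¹ • m ∈ M := hconic s⁻¹ (inv_pos.mpr hs) m hm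
    have hne2 : v - s⁻¹ • m ≠ 0 := by
      intro h
      apply h1
      rw [heq, h, smul_zero]
    calc g (s • v - m) = g (v - s⁻¹ • m) := by rw [heq, hgsmul s hsne]
      _ ≤ S := hmemS _ (Set.sub_mem_sub rfl hmem) hne2
  -- Lemma C' : for c in closure M nonzero, g c ≤ S
  have lemC' : ∀ c ∈ closure M, c ≠ 0 → g c ≤ S := by
    intro c hc hc0
    have hnb : (nhdsWithin c M).NeBot := mem_closure_iff_nhdsWithin_neBot.mp hc
    have htend : Filter.Tendsto g (nhdsWithin c M) (nhds (g c)) :=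
      (hgcont _ hc0).tendsto.mono_left nhdsWithin_le_nhds
    refine le_of_tendsto htend ?_
    have hev1 : ∀ᶠ x in nhdsWithin c M, x ≠ 0 := by
      have : ContinuousAt (fun x : EuclideanSpace ℝ (Fin N) => x) c := continuous_id.continuousAt
      exact (this.eventually_ne hc0).filter_mono nhdsWithin_le_nhds
    have hev2 : ∀ᶠ x in nhdsWithin c M, x ∈ M := eventually_mem_nhdsWithin
    filter_upwards [hev1, hev2] with x h1 h2
    exact lemC x h2 h1
  apply le_antisymm
  · refine Real.iSup_le ?_ hTnn
    rintro ⟨a, haA, ha0⟩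
    rcases Set.mem_sub.mp haA with ⟨x, hx, m, hm, rfl⟩
    rcases hx with rfl
    have hmemB : x - m ∈ B := by
      rw [hB, sub_eq_add_neg x (m : EuclideanSpace ℝ (Fin N))]
      exact Set.add_mem_add (Submodule.mem_span_singleton_self x) (subset_closure (hsymm' m hm))
    exact hmemT _ hmemB ha0
  · refine Real.iSup_le ?_ hSnn
    rintro ⟨b, hbB, hb0⟩
    rcases Set.mem_add.mp hbB with ⟨w, hw, c, hc, rfl⟩
    rcases Submodule.mem_span_singleton.mp hw with ⟨t, rfl⟩
    by_cases ht : t = 0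
    · subst ht
      simp only [zero_smul, zero_add] at hb0 ⊢
      exact lemC' c hc hb0
    · set c' : EuclideanSpace ℝ (Fin N) := (-t⁻¹) • c with hc'
      have hc'mem : c' ∈ closure M := hclM (-t⁻¹) (by simp [ht]) c hc
      have heq : v - c' = t⁻¹ • (t • v + c) := by
        rw [hc', smul_add, smul_smul, inv_mul_cancel₀ ht, one_smul]
        module
      have hne : v - c' ≠ 0 := by
        rw [heq]
        exact smul_ne_zero (inv_ne_zero ht) hb0
      calc g (t • v + c) = g (t⁻¹ • (t • v + c)) := (hgsmul t⁻¹ (inv_ne_zero ht) _).symm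
        _ = g (v - c') := by rw [heq]
        _ ≤ S := lemB c' hc'mem hne
end

section
/- Let V = ℝ^{d₁×d₂} with norm ‖v‖ := ‖v‖_Fro/√(d₁d₂), let M be the set of rank-1 matrices, 𝟙 the all-ones matrix, and Δ = e_i e_j^⊤ a standard basis matrix. Then the variation function of {𝟙} − M at entry (i,j) satisfies 𝔎_{{𝟙}−M}(i,j) ≥ d₁d₂, with equality to the ambient value 𝔎_V(i,j) = d₁d₂. -/
open scoped Pointwise

/-- The variation function of a set `S ⊆ ℝ^{d₁×d₂}` at entry `(i,j)`:
`𝔎_S(i,j) = sup_{s ∈ S \ {0}} s_{ij}² / ‖s‖²` with `‖s‖² = ‖s‖²_Fro/(d₁d₂)`. -/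
noncomputable def varFunMat {d₁ d₂ : ℕ} (S : Set (Matrix (Fin d₁) (Fin d₂) ℝ))
    (i : Fin d₁) (j : Fin d₂) : ℝ :=
  ⨆ s : {s : Matrix (Fin d₁) (Fin d₂) ℝ // s ∈ S ∧ s ≠ 0},
    (s.1 i j) ^ 2 / ((∑ k, ∑ l, (s.1 k l) ^ 2) / ((d₁ : ℝ) * d₂))


lemma sum_ite_eq_card {n : ℕ} (j : Fin n) (A B : ℝ) :
    ∑ l : Fin n, (if l = j then A else B) = A + ((n : ℝ) - 1) * B := by
  have h : ∀ l : Fin n, (if l = j then A else B) = B + (if l = j then A - B else 0) := by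
    intro l; by_cases h : l = j <;> simp [h]
  rw [Finset.sum_congr rfl fun l _ => h l, Finset.sum_add_distrib,
    Finset.sum_ite_eq' Finset.univ j (fun _ => A - B)]
  simp [Finset.card_univ]
  ring

lemma rank_vecMulVec_le_one {d₁ d₂ : ℕ} (a : Fin d₁ → ℝ) (b : Fin d₂ → ℝ) :
    (Matrix.vecMulVec a b).rank ≤ 1 := by
  rw [Matrix.vecMulVec_eq (Fin 1)]
  exact (Matrix.rank_mul_le_left _ _).trans
    ((Matrix.rank_le_card_width _).trans (by simp))

lemma ratio_le_D {d₁ d₂ : ℕ} (i : Fin d₁) (j : Fin d₂)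
    (s : Matrix (Fin d₁) (Fin d₂) ℝ) (hs : s ≠ 0) :
    (s i j) ^ 2 / ((∑ k, ∑ l, (s k l) ^ 2) / ((d₁ : ℝ) * d₂)) ≤ (d₁ : ℝ) * d₂ := by
  have hD : (0 : ℝ) < (d₁ : ℝ) * d₂ := by
    have h1 : 0 < d₁ := Fin.pos i
    have h2 : 0 < d₂ := Fin.pos j
    positivity
  obtain ⟨k, hk⟩ : ∃ k, s k ≠ 0 := by
    by_contra h; push_neg at h; exact hs (by ext k l; simp [h k])
  obtain ⟨l, hl⟩ : ∃ l, s k l ≠ 0 := by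
    by_contra h; push_neg at h; exact hk (by ext l; simp [h l])
  have hS : 0 < ∑ k, ∑ l, (s k l) ^ 2 := by
    apply Finset.sum_pos' (fun _ _ => Finset.sum_nonneg fun _ _ => sq_nonneg _)
    exact ⟨k, Finset.mem_univ _, Finset.sum_pos' (fun _ _ => sq_nonneg _)
      ⟨l, Finset.mem_univ _, by positivity⟩⟩
  have hle : (s i j) ^ 2 ≤ ∑ k, ∑ l, (s k l) ^ 2 := by
    calc (s i j) ^ 2 ≤ ∑ l, (s i l) ^ 2 :=
          Finset.single_le_sum (f := fun l => (s i l) ^ 2)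
            (fun _ _ => sq_nonneg _) (Finset.mem_univ j)
      _ ≤ ∑ k, ∑ l, (s k l) ^ 2 :=
          Finset.single_le_sum (f := fun k => ∑ l, (s k l) ^ 2)
            (fun _ _ => Finset.sum_nonneg fun _ _ => sq_nonneg _) (Finset.mem_univ i)
  rw [div_div_eq_mul_div, div_le_iff₀ hS]
  calc (s i j) ^ 2 * ((d₁ : ℝ) * d₂) ≤ (∑ k, ∑ l, (s k l) ^ 2) * ((d₁ : ℝ) * d₂) :=
        mul_le_mul_of_nonneg_right hle hD.le
    _ = (d₁ : ℝ) * d₂ * (∑ k, ∑ l, (s k l) ^ 2) := by ring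

section family
variable {d₁ d₂ : ℕ} (i : Fin d₁) (j : Fin d₂) (t : ℝ)

noncomputable def sFam : Matrix (Fin d₁) (Fin d₂) ℝ :=
  Matrix.of fun k l =>
    1 - (if k = i then 1 + t else 1) * (if l = j then 1 + t else 1)

lemma sFam_eq : sFam i j t = (Matrix.of fun _ _ => (1 : ℝ)) -
    Matrix.vecMulVec (fun k => if k = i then 1 + t else 1)
      (fun l => if l = j then 1 + t else 1) := by
  ext k l
  simp [sFam, Matrix.vecMulVec_apply]

lemma sFam_apply_ij : sFam i j t i j = -(t ^ 2 + 2 * t) := by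
  simp [sFam]; ring

lemma sFam_sum : ∑ k, ∑ l, (sFam i j t k l) ^ 2 =
    ((t ^ 2 + 2 * t) ^ 2 + ((d₂ : ℝ) - 1) * t ^ 2) + ((d₁ : ℝ) - 1) * t ^ 2 := by
  have hrow : ∀ k, ∑ l, (sFam i j t k l) ^ 2 =
      if k = i then (t ^ 2 + 2 * t) ^ 2 + ((d₂ : ℝ) - 1) * t ^ 2 else t ^ 2 := by
    intro k
    by_cases hk : k = i
    · have h : ∀ l, (sFam i j t k l) ^ 2 =
          if l = j then (t ^ 2 + 2 * t) ^ 2 else t ^ 2 := by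
        intro l; by_cases hl : l = j <;> simp [sFam, hk, hl] <;> ring
      rw [Finset.sum_congr rfl fun l _ => h l, sum_ite_eq_card, if_pos hk]
    · have h : ∀ l, (sFam i j t k l) ^ 2 = if l = j then t ^ 2 else 0 := by
        intro l; by_cases hl : l = j <;> simp [sFam, hk, hl] <;> ring
      rw [Finset.sum_congr rfl fun l _ => h l, sum_ite_eq_card, if_neg hk]
      ring
  rw [Finset.sum_congr rfl fun k _ => hrow k, sum_ite_eq_card]

end family

/-- For `M` the set of matrices of rank at most `1` and `𝟙` the all-ones matrix,
the variation function of `{𝟙} − M` at any entry `(i,j)` satisfies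
`𝔎_{{𝟙}−M}(i,j) ≥ d₁d₂`, with equality to the ambient value `𝔎_V(i,j) = d₁d₂`. -/
theorem varFunMat_ones_sub_rank_one {d₁ d₂ : ℕ} (i : Fin d₁) (j : Fin d₂)
    (M : Set (Matrix (Fin d₁) (Fin d₂) ℝ)) (hM : M = {m | m.rank ≤ 1}) :
    (d₁ : ℝ) * d₂ ≤ varFunMat (({Matrix.of fun _ _ => (1 : ℝ)} : Set _) - M) i j ∧
      varFunMat (({Matrix.of fun _ _ => (1 : ℝ)} : Set _) - M) i j
        = varFunMat (Set.univ : Set (Matrix (Fin d₁) (Fin d₂) ℝ)) i j ∧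
      varFunMat (Set.univ : Set (Matrix (Fin d₁) (Fin d₂) ℝ)) i j = (d₁ : ℝ) * d₂ := by
  subst hM
  have h1 : 0 < d₁ := Fin.pos i
  have h2 : 0 < d₂ := Fin.pos j
  set D : ℝ := (d₁ : ℝ) * d₂ with hDdef
  have hD : (0 : ℝ) < D := by positivity
  set S : Set (Matrix (Fin d₁) (Fin d₂) ℝ) :=
    ({Matrix.of fun _ _ => (1 : ℝ)} : Set _) - {m | m.rank ≤ 1} with hSdef
  -- membership of the family
  have hmem : ∀ t : ℝ, sFam i j t ∈ S := by
    intro t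
    rw [hSdef, Set.mem_sub]
    exact ⟨Matrix.of fun _ _ => (1 : ℝ), rfl, _, rank_vecMulVec_le_one _ _,
      (sFam_eq i j t).symm⟩
  have hne : ∀ t : ℝ, 1 ≤ t → sFam i j t ≠ 0 := by
    intro t ht h0
    have : sFam i j t i j = 0 := by rw [h0]; rfl
    rw [sFam_apply_ij] at this
    nlinarith
  -- bounded above
  have hbddS : BddAbove (Set.range fun s : {s : Matrix (Fin d₁) (Fin d₂) ℝ // s ∈ S ∧ s ≠ 0} =>
      (s.1 i j) ^ 2 / ((∑ k, ∑ l, (s.1 k l) ^ 2) / D)) :=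
    ⟨D, by rintro _ ⟨s, rfl⟩; exact ratio_le_D i j s.1 s.2.2⟩
  have hbddU : BddAbove (Set.range fun s : {s : Matrix (Fin d₁) (Fin d₂) ℝ //
      s ∈ (Set.univ : Set (Matrix (Fin d₁) (Fin d₂) ℝ)) ∧ s ≠ 0} =>
      (s.1 i j) ^ 2 / ((∑ k, ∑ l, (s.1 k l) ^ 2) / D)) :=
    ⟨D, by rintro _ ⟨s, rfl⟩; exact ratio_le_D i j s.1 s.2.2⟩
  haveI hNS : Nonempty {s : Matrix (Fin d₁) (Fin d₂) ℝ // s ∈ S ∧ s ≠ 0} :=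
    ⟨⟨sFam i j 1, hmem 1, hne 1 le_rfl⟩⟩
  haveI hNU : Nonempty {s : Matrix (Fin d₁) (Fin d₂) ℝ //
      s ∈ (Set.univ : Set (Matrix (Fin d₁) (Fin d₂) ℝ)) ∧ s ≠ 0} :=
    ⟨⟨sFam i j 1, trivial, hne 1 le_rfl⟩⟩
  -- upper bounds on the sups
  have hUleD : varFunMat (Set.univ : Set (Matrix (Fin d₁) (Fin d₂) ℝ)) i j ≤ D :=
    ciSup_le fun s => ratio_le_D i j s.1 s.2.2
  have hSleD : varFunMat S i j ≤ D :=
    ciSup_le fun s => ratio_le_D i j s.1 s.2.2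
  -- lower bound on the S-sup
  set c : ℝ := (d₁ : ℝ) + (d₂ : ℝ) - 2 with hcdef
  have hc : 0 ≤ c := by
    have : (1 : ℝ) ≤ d₁ := by exact_mod_cast h1
    have : (1 : ℝ) ≤ d₂ := by exact_mod_cast h2
    rw [hcdef]; linarith [show (1:ℝ) ≤ d₁ by exact_mod_cast h1]
  have key : D ≤ varFunMat S i j := by
    apply le_of_forall_sub_le
    intro ε hε
    set t : ℝ := max 1 (D * c / ε) with htdef
    have ht1 : (1 : ℝ) ≤ t := le_max_left _ _
    have ht0 : (0 : ℝ) < t := lt_of_lt_of_le one_pos ht1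
    have ht2 : (0 : ℝ) < t ^ 2 := by positivity
    have htsq : D * c / ε ≤ t ^ 2 := by
      calc D * c / ε ≤ t := le_max_right _ _
        _ ≤ t ^ 2 := by nlinarith
    have hεt : D * c / t ^ 2 ≤ ε := by
      rw [div_le_iff₀ ht2]
      rw [div_le_iff₀ hε] at htsq
      linarith
    set T : ℝ := t ^ 2 + 2 * t with hTdef
    have hT4 : t ^ 2 * t ^ 2 ≤ T ^ 2 := by nlinarith
    have hQ : (0 : ℝ) < T ^ 2 + c * t ^ 2 := by nlinarith
    -- the value of the ratio at sFam t
    have hval : (sFam i j t i j) ^ 2 / ((∑ k, ∑ l, (sFam i j t k l) ^ 2) / D)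
        = T ^ 2 * D / (T ^ 2 + c * t ^ 2) := by
      rw [sFam_apply_ij, sFam_sum, div_div_eq_mul_div]
      congr 1
      · ring
      · rw [hcdef]; ring
    have hlow : D - D * c / t ^ 2 ≤ T ^ 2 * D / (T ^ 2 + c * t ^ 2) := by
      rw [le_div_iff₀ hQ]
      set u : ℝ := D * c / t ^ 2 with hudef
      have hu : u * t ^ 2 = D * c := by rw [hudef]; field_simp
      have hu0 : 0 ≤ u := by rw [hudef]; positivity
      have h5 : D * c * t ^ 2 = u * (t ^ 2 * t ^ 2) := by rw [← hu]; ring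
      nlinarith [h5, mul_le_mul_of_nonneg_left hT4 hu0,
        mul_nonneg (mul_nonneg hu0 hc) ht2.le]
    have hle : D - ε ≤ (sFam i j t i j) ^ 2 / ((∑ k, ∑ l, (sFam i j t k l) ^ 2) / D) := by
      rw [hval]
      calc D - ε ≤ D - D * c / t ^ 2 := by linarith
        _ ≤ _ := hlow
    calc D - ε ≤ (sFam i j t i j) ^ 2 / ((∑ k, ∑ l, (sFam i j t k l) ^ 2) / D) := hle
      _ ≤ varFunMat S i j :=
          le_ciSup hbddS (⟨sFam i j t, hmem t, hne t ht1⟩ :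
            {s : Matrix (Fin d₁) (Fin d₂) ℝ // s ∈ S ∧ s ≠ 0})
  -- lower bound on the universal sup: the basis matrix
  have hUgeD : D ≤ varFunMat (Set.univ : Set (Matrix (Fin d₁) (Fin d₂) ℝ)) i j := by
    set Δ : Matrix (Fin d₁) (Fin d₂) ℝ :=
      Matrix.of fun k l => if k = i then (if l = j then 1 else 0) else 0 with hΔdef
    have hΔij : Δ i j = 1 := by simp [hΔdef]
    have hΔne : Δ ≠ 0 := by
      intro h0
      have : Δ i j = 0 := by rw [h0]; rfl
      rw [hΔij] at this; norm_num at this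
    have hΔsum : ∑ k, ∑ l, (Δ k l) ^ 2 = 1 := by
      have hrow : ∀ k, ∑ l, (Δ k l) ^ 2 = if k = i then 1 else 0 := by
        intro k
        by_cases hk : k = i
        · have h : ∀ l, (Δ k l) ^ 2 = if l = j then 1 else 0 := by
            intro l; by_cases hl : l = j <;> simp [hΔdef, hk, hl]
          rw [Finset.sum_congr rfl fun l _ => h l, sum_ite_eq_card, if_pos hk]
          ring
        · have h : ∀ l, (Δ k l) ^ 2 = (0 : ℝ) := by
            intro l; simp [hΔdef, hk]
          rw [Finset.sum_congr rfl fun l _ => h l, if_neg hk]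
          simp
      rw [Finset.sum_congr rfl fun k _ => hrow k, sum_ite_eq_card]
      ring
    have hval : (Δ i j) ^ 2 / ((∑ k, ∑ l, (Δ k l) ^ 2) / D) = D := by
      rw [hΔij, hΔsum]
      field_simp
    calc D = (Δ i j) ^ 2 / ((∑ k, ∑ l, (Δ k l) ^ 2) / D) := hval.symm
      _ ≤ _ := le_ciSup hbddU (⟨Δ, trivial, hΔne⟩ :
          {s : Matrix (Fin d₁) (Fin d₂) ℝ //
            s ∈ (Set.univ : Set (Matrix (Fin d₁) (Fin d₂) ℝ)) ∧ s ≠ 0})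
  exact ⟨key, le_antisymm (hSleD.trans hUgeD) (hUleD.trans key), le_antisymm hUleD hUgeD⟩
end
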